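/- arXiv:1803.05097 — 4 statements merged into one kernel-verified Lean document; each statement's English description precedes it below -/
import Mathlib

section
/- Let f : ℕ → ℕ be the Fibonacci sequence with f 0 = 1 and f 1 = 1. Define sequences wA, hA, wB, hB : ℕ → ℕ (indexed from 1) by wA 1 = 1, hA 1 = 1, wB 1 = 1, hB 1 = 2, and the recursions wA (n+1) = wB n + wA n, hA (n+1) = hB n + hA n, wB (n+1) = wB n + wA (n+1), hB (n+1) = hB n + hA (n+1). Then for all n ≥ 1: wA n = f (2n-2), hA n = f (2n-1), wB n = f (2n-1), and hB n = f (2n). -/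
theorem fib_walk_widths_heights
    (f wA hA wB hB : ℕ → ℕ)
    (hf0 : f 0 = 1) (hf1 : f 1 = 1)
    (hf : ∀ n, f (n + 2) = f (n + 1) + f n)
    (hwA1 : wA 1 = 1) (hhA1 : hA 1 = 1) (hwB1 : wB 1 = 1) (hhB1 : hB 1 = 2)
    (hwA : ∀ n ≥ 1, wA (n + 1) = wB n + wA n)
    (hhA : ∀ n ≥ 1, hA (n + 1) = hB n + hA n)
    (hwB : ∀ n ≥ 1, wB (n + 1) = wB n + wA (n + 1))
    (hhB : ∀ n ≥ 1, hB (n + 1) = hB n + hA (n + 1)) :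
    ∀ n ≥ 1, wA n = f (2 * n - 2) ∧ hA n = f (2 * n - 1) ∧
      wB n = f (2 * n - 1) ∧ hB n = f (2 * n) := by
  intro n hn
  induction n with
  | zero => omega
  | succ m ih =>
    rcases Nat.eq_or_lt_of_le hn with h | h
    · have hf2 : f 2 = 2 := by rw [show (2:ℕ) = 0 + 2 by rfl, hf, hf0, hf1]
      rw [← h]
      norm_num [hwA1, hhA1, hwB1, hhB1, hf0, hf1, hf2]
    · have hm : m ≥ 1 := by omega
      obtain ⟨h1, h2, h3, h4⟩ := ih hm
      have e1 : 2 * (m + 1) - 2 = 2 * m := by omega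
      have e2 : 2 * (m + 1) - 1 = 2 * m + 1 := by omega
      have e3 : 2 * (m + 1) = 2 * m + 2 := by omega
      have e4 : 2 * m - 1 + 1 = 2 * m := by omega
      have e5 : 2 * m - 2 + 2 = 2 * m := by omega
      have e6 : 2 * m - 2 + 1 = 2 * m - 1 := by omega
      have key : f (2 * m) = f (2 * m - 1) + f (2 * m - 2) := by
        have := hf (2 * m - 2); rw [e5, e6] at this; exact this
      have wAe : wA (m + 1) = f (2 * m) := by rw [hwA m hm, h1, h3, key]
      have hAe : hA (m + 1) = f (2 * m + 1) := by
        rw [hhA m hm, h2, h4, ← e4, hf, e4]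
      refine ⟨by rw [e1, wAe], by rw [e2, hAe], ?_, ?_⟩
      · rw [e2, hwB m hm, h3, wAe, ← e4, hf, e4, Nat.add_comm]
      · rw [e3, hhB m hm, h4, hAe, hf, Nat.add_comm]
end

section
/- Let f be the Fibonacci sequence with f 0 = f 1 = 1, and for n ≥ 1 define the list of 2n+2 vectors P n = [(1,0), (f 0, f 1), (f 2, f 3), …, (f (2n-2), f (2n-1)), (f (2n-1), f (2n)), (f (2n-3), f (2n-1)), …, (f 1, f 2), (0,1)] in ℤ². Then the sequence of slopes of these vectors (treating (1,0) as slope 0 and (0,1) as slope +∞) is strictly increasing. -/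
/-- The edge-vector list `P n` of the paper, as a function on indices `1 ≤ k ≤ 2n+2`:
`P 1 = (1,0)`; for `2 ≤ k ≤ n+1`, `P k = (f (2(k-1)-2), f (2(k-1)-1))` (the vector of `A (k-1)`);
for `n+2 ≤ k ≤ 2n+1`, `P k = (f (2(2n+2-k)-1), f (2(2n+2-k)))` (the vector of `B (2n+2-k)`);
and `P (2n+2) = (0,1)`.  The slopes are strictly increasing, i.e. all cross products of an
earlier vector with a later one are positive (this also handles `(1,0)` as slope `0` and
`(0,1)` as slope `+∞`). -/
theorem slopes_of_P_strictly_increasing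
    (n : ℕ) (hn : 1 ≤ n)
    (f : ℕ → ℕ) (hf0 : f 0 = 1) (hf1 : f 1 = 1)
    (hf : ∀ m, f (m + 2) = f (m + 1) + f m)
    (P : ℕ → ℤ × ℤ)
    (hP1 : P 1 = (1, 0))
    (hPA : ∀ k, 2 ≤ k → k ≤ n + 1 →
      P k = ((f (2 * (k - 1) - 2) : ℤ), (f (2 * (k - 1) - 1) : ℤ)))
    (hPB : ∀ k, n + 2 ≤ k → k ≤ 2 * n + 1 →
      P k = ((f (2 * (2 * n + 2 - k) - 1) : ℤ), (f (2 * (2 * n + 2 - k)) : ℤ)))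
    (hPlast : P (2 * n + 2) = (0, 1)) :
    ∀ i j, 1 ≤ i → i < j → j ≤ 2 * n + 2 →
      (P i).1 * (P j).2 - (P j).1 * (P i).2 > 0 := by
  -- positivity of f
  have hfpos : ∀ m, 1 ≤ f m := by
    intro m
    induction m using Nat.strong_induction_on with
    | _ m ih =>
      match m with
      | 0 => omega
      | 1 => omega
      | (m+2) =>
        rw [hf m]
        have := ih (m+1) (by omega)
        omega
  -- key identity
  have key : ∀ a d, (f a : ℤ) * f (a + d + 2) - f (a + 1) * f (a + d + 1)
      = (-1 : ℤ) ^ a * f d := by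
    intro a
    induction a with
    | zero =>
      intro d
      have e : 0 + d + 2 = d + 2 := by omega
      have e2 : 0 + d + 1 = d + 1 := by omega
      rw [e, e2, hf d, hf0, hf1]
      push_cast
      ring
    | succ a ih =>
      intro d
      have h1 := ih d
      have e2 : a + 1 + d + 2 = (a + d + 1) + 2 := by omega
      have e3 : a + 1 + d + 1 = a + d + 2 := by omega
      rw [e2, e3, hf (a + d + 1), hf a]
      push_cast
      push_cast at h1
      rw [pow_succ]
      linear_combination (-1 : ℤ) * h1
  -- unified positivity of cross products of interior vectors
  have pos2 : ∀ α β : ℕ, ((α < β ∧ α % 2 = 0) ∨ (β < α ∧ β % 2 = 1)) →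
      0 < (f α : ℤ) * f (β + 1) - f β * f (α + 1) := by
    intro α β h
    rcases h with ⟨hlt, hpar⟩ | ⟨hlt, hpar⟩
    · obtain ⟨d, rfl⟩ : ∃ d, β = α + d + 1 := ⟨β - α - 1, by omega⟩
      have hk := key α d
      have h2 : ((-1 : ℤ)) ^ α = 1 := by
        obtain ⟨c, rfl⟩ : ∃ c, α = 2 * c := ⟨α / 2, by omega⟩
        simp [pow_mul]
      rw [h2, one_mul] at hk
      have hd : (1 : ℤ) ≤ (f d : ℤ) := by exact_mod_cast hfpos d
      have e : α + d + 1 + 1 = α + d + 2 := by omega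
      rw [e]
      linarith [hk]
    · obtain ⟨d, rfl⟩ : ∃ d, α = β + d + 1 := ⟨α - β - 1, by omega⟩
      have hk := key β d
      have h2 : ((-1 : ℤ)) ^ β = -1 := by
        obtain ⟨c, rfl⟩ : ∃ c, β = 2 * c + 1 := ⟨β / 2, by omega⟩
        simp [pow_succ, pow_mul]
      rw [h2] at hk
      have hd : (1 : ℤ) ≤ (f d : ℤ) := by exact_mod_cast hfpos d
      have e : β + d + 1 + 1 = β + d + 2 := by omega
      linarith [hk]
  -- characterization of interior vectors
  have hchar : ∀ k, 2 ≤ k → k ≤ 2 * n + 1 →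
      ∃ α, P k = ((f α : ℤ), (f (α + 1) : ℤ)) ∧
        ((k ≤ n + 1 ∧ α = 2 * (k - 2)) ∨ (n + 2 ≤ k ∧ α = 2 * (2 * n + 1 - k) + 1)) := by
    intro k h2 h1
    by_cases hk : k ≤ n + 1
    · refine ⟨2 * (k - 2), ?_, Or.inl ⟨hk, rfl⟩⟩
      have h := hPA k h2 hk
      have e1 : 2 * (k - 1) - 2 = 2 * (k - 2) := by omega
      have e2 : 2 * (k - 1) - 1 = 2 * (k - 2) + 1 := by omega
      rw [e1, e2] at h
      exact h
    · refine ⟨2 * (2 * n + 1 - k) + 1, ?_, Or.inr ⟨by omega, rfl⟩⟩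
      have h := hPB k (by omega) h1
      have e1 : 2 * (2 * n + 2 - k) - 1 = 2 * (2 * n + 1 - k) + 1 := by omega
      have e2 : 2 * (2 * n + 2 - k) = 2 * (2 * n + 1 - k) + 1 + 1 := by omega
      rw [e1, e2] at h
      exact h
  intro i j hi hij hj
  by_cases hi1 : i = 1
  · subst hi1
    rw [hP1]
    by_cases hj1 : j = 2 * n + 2
    · subst hj1
      rw [hPlast]
      norm_num
    · obtain ⟨α, hPj, _⟩ := hchar j (by omega) (by omega)
      rw [hPj]
      simp only [Prod.fst, Prod.snd]
      have := hfpos (α + 1)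
      simp only [one_mul, mul_zero]
      have : (0 : ℤ) < (f (α + 1) : ℤ) := by exact_mod_cast hfpos (α + 1)
      linarith
  · by_cases hj1 : j = 2 * n + 2
    · subst hj1
      rw [hPlast]
      obtain ⟨α, hPi, _⟩ := hchar i (by omega) (by omega)
      rw [hPi]
      simp only [mul_one, zero_mul]
      have : (0 : ℤ) < (f α : ℤ) := by exact_mod_cast hfpos α
      linarith
    · obtain ⟨α, hPi, hci⟩ := hchar i (by omega) (by omega)
      obtain ⟨β, hPj, hcj⟩ := hchar j (by omega) (by omega)
      rw [hPi, hPj]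
      show 0 < (f α : ℤ) * f (β + 1) - f β * f (α + 1)
      apply pos2
      rcases hci with ⟨hki, rfl⟩ | ⟨hki, rfl⟩ <;>
        rcases hcj with ⟨hkj, rfl⟩ | ⟨hkj, rfl⟩ <;> omega
end

section
/- Let f be the Fibonacci sequence with f 0 = f 1 = 1, and let p 0 = (0,0), p k = p (k-1) + P n (k) for 1 ≤ k ≤ 2n+2, where P n is the list [(1,0), (f 0,f 1), …, (f(2n-2), f(2n-1)), (f(2n-1), f(2n)), (f(2n-3), f(2n-1)), …, (f 1, f 2), (0,1)]. Then the polygon with vertex set {p k : 0 ≤ k ≤ 2n+2} ∪ {p(2n+2) - p k : 0 < k < 2n+2} is centrally symmetric about (1/2) p(2n+2), and has exactly 4n + 4 distinct vertices, each an extreme point of the convex hull of this set. -/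
def dotII (a v : ℤ × ℤ) : ℤ := a.1 * v.1 + a.2 * v.2

lemma dotII_add (a u v : ℤ × ℤ) : dotII a (u + v) = dotII a u + dotII a v := by
  simp [dotII, Prod.fst_add, Prod.snd_add]; ring

lemma dotII_sub (a u v : ℤ × ℤ) : dotII a (u - v) = dotII a u - dotII a v := by
  simp [dotII, Prod.fst_sub, Prod.snd_sub]; ring

lemma dotII_sum (a : ℤ × ℤ) (s : Finset ℕ) (g : ℕ → ℤ × ℤ) :
    dotII a (∑ i ∈ s, g i) = ∑ i ∈ s, dotII a (g i) := by
  classical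
  induction s using Finset.induction with
  | empty => simp [dotII]
  | insert _ _ h ih => rw [Finset.sum_insert h, Finset.sum_insert h, dotII_add, ih]

lemma fib_pos' (f : ℕ → ℕ) (hf0 : f 0 = 1) (hf1 : f 1 = 1)
    (hf : ∀ m, f (m + 2) = f (m + 1) + f m) : ∀ m, 1 ≤ f m := by
  have h : ∀ m, 1 ≤ f m ∧ 1 ≤ f (m + 1) := by
    intro m
    induction m with
    | zero => exact ⟨le_of_eq hf0.symm, le_of_eq hf1.symm⟩
    | succ k ih => exact ⟨ih.2, by rw [hf]; omega⟩
  exact fun m => (h m).1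

lemma docagne (f : ℕ → ℕ) (hf0 : f 0 = 1) (hf1 : f 1 = 1)
    (hf : ∀ m, f (m + 2) = f (m + 1) + f m) :
    ∀ a b d : ℕ, b = a + d + 1 →
      (f a : ℤ) * f (b + 1) - f (a + 1) * f b = (-1) ^ a * f d := by
  have key : ∀ a d : ℕ,
      (f a : ℤ) * f (a + d + 2) - f (a + 1) * f (a + d + 1) = (-1) ^ a * f d := by
    intro a
    induction a with
    | zero =>
      intro d
      have := hf d
      simp only [hf0, hf1, zero_add, pow_zero, one_mul, Nat.cast_one]
      push_cast [this]
      ring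
    | succ k ih =>
      intro d
      have h1 := hf (k + d + 1)
      have h2 := hf k
      have h3 := ih d
      have e1 : k + 1 + d + 2 = k + d + 1 + 2 := by omega
      have e2 : k + 1 + d + 1 = k + d + 2 := by omega
      rw [e1, e2, h1, h2]
      push_cast
      push_cast at h3
      rw [pow_succ]
      nlinarith [h3]
  intro a b d hb
  rw [hb]
  exact key a d

lemma not_mem_convexHull_halfspace (a b c : ℝ) (s : Set (ℝ × ℝ)) (v : ℝ × ℝ)
    (hv : c < a * v.1 + b * v.2) (hs : ∀ w ∈ s, a * w.1 + b * w.2 ≤ c) :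
    v ∉ convexHull ℝ s := by
  have hl : IsLinearMap ℝ (fun x : ℝ × ℝ => a * x.1 + b * x.2) := by
    constructor
    · intro x y; simp [Prod.fst_add, Prod.snd_add]; ring
    · intro t x; simp [Prod.smul_fst, Prod.smul_snd, smul_eq_mul]; ring
  have hconv : Convex ℝ {x : ℝ × ℝ | a * x.1 + b * x.2 ≤ c} := convex_halfSpace_le hl c
  intro hmem
  have := convexHull_min hs hconv hmem
  have h2 : a * v.1 + b * v.2 ≤ c := this
  linarith

lemma intMap_inj : Function.Injective (fun v : ℤ × ℤ => ((v.1 : ℝ), (v.2 : ℝ))) := by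
  intro x y h
  simp only [Prod.mk.injEq, Int.cast_inj] at h
  exact Prod.ext h.1 h.2

/-- The vertex set of the convex hull `C n` from the paper: the partial sums `p k` of the
edge-vector list `P n`, together with their images under the point symmetry
`Θ n : v ↦ p (2n+2) - v`.  The set is centrally symmetric about `(1/2) p (2n+2)`, has
exactly `4n+4` points, and every point is an extreme point of its convex hull. -/
theorem convex_hull_vertices_of_walk
    (n : ℕ) (hn : 1 ≤ n)
    (f : ℕ → ℕ) (hf0 : f 0 = 1) (hf1 : f 1 = 1)
    (hf : ∀ m, f (m + 2) = f (m + 1) + f m)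
    (P : ℕ → ℤ × ℤ)
    (hP1 : P 1 = (1, 0))
    (hPA : ∀ k, 2 ≤ k → k ≤ n + 1 →
      P k = ((f (2 * (k - 1) - 2) : ℤ), (f (2 * (k - 1) - 1) : ℤ)))
    (hPB : ∀ k, n + 2 ≤ k → k ≤ 2 * n + 1 →
      P k = ((f (2 * (2 * n + 2 - k) - 1) : ℤ), (f (2 * (2 * n + 2 - k)) : ℤ)))
    (hPlast : P (2 * n + 2) = (0, 1))
    (p : ℕ → ℤ × ℤ)
    (hp0 : p 0 = (0, 0))
    (hp : ∀ k, 1 ≤ k → k ≤ 2 * n + 2 → p k = p (k - 1) + P k)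
    (S : Set (ℝ × ℝ))
    (hS : S = (fun v : ℤ × ℤ => ((v.1 : ℝ), (v.2 : ℝ))) ''
      ({p k | k ≤ 2 * n + 2} ∪ {p (2 * n + 2) - p k | k ∈ Set.Ioo 0 (2 * n + 2)})) :
    (∀ v ∈ S, (2 : ℝ) • ((1 / 2 : ℝ) • ((↑(p (2 * n + 2)).1 : ℝ), (↑(p (2 * n + 2)).2 : ℝ))) - v ∈ S) ∧
    S.ncard = 4 * n + 4 ∧
    ∀ v ∈ S, v ∉ convexHull ℝ (S \ {v}) := by
  have fpos := fib_pos' f hf0 hf1 hf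
  have fposZ : ∀ m, (1 : ℤ) ≤ (f m : ℤ) := fun m => by exact_mod_cast fpos m
  -- normalized edge descriptions
  have hA' : ∀ j, j < n → P (j + 2) = ((f (2 * j) : ℤ), (f (2 * j + 1) : ℤ)) := by
    intro j hj
    have h := hPA (j + 2) (by omega) (by omega)
    have e1 : 2 * ((j + 2) - 1) - 2 = 2 * j := by omega
    have e2 : 2 * ((j + 2) - 1) - 1 = 2 * j + 1 := by omega
    rw [e1, e2] at h; exact h
  have hB' : ∀ t, t < n → P (2 * n + 1 - t) = ((f (2 * t + 1) : ℤ), (f (2 * t + 2) : ℤ)) := by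
    intro t ht
    have h := hPB (2 * n + 1 - t) (by omega) (by omega)
    have e1 : 2 * (2 * n + 2 - (2 * n + 1 - t)) - 1 = 2 * t + 1 := by omega
    have e2 : 2 * (2 * n + 2 - (2 * n + 1 - t)) = 2 * t + 2 := by omega
    rw [e1, e2] at h; exact h
  have hclass : ∀ k, 1 ≤ k → k ≤ 2 * n + 2 →
      k = 1 ∨ (∃ j, j < n ∧ k = j + 2) ∨ (∃ t, t < n ∧ k = 2 * n + 1 - t) ∨ k = 2 * n + 2 := by
    intro k h1 h2
    by_cases hc1 : k = 1
    · exact Or.inl hc1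
    by_cases hc2 : k ≤ n + 1
    · exact Or.inr (Or.inl ⟨k - 2, by omega, by omega⟩)
    by_cases hc3 : k ≤ 2 * n + 1
    · exact Or.inr (Or.inr (Or.inl ⟨2 * n + 1 - k, by omega, by omega⟩))
    · exact Or.inr (Or.inr (Or.inr (by omega)))
  -- identities
  have keyE : ∀ a b d : ℕ, b = 2 * a + d + 1 →
      (f (2 * a) : ℤ) * f (b + 1) - f (2 * a + 1) * f b = f d := by
    intro a b d hb
    have h := docagne f hf0 hf1 hf (2 * a) b d (by omega)
    rw [h, pow_mul]; norm_num
  have keyO : ∀ a b d : ℕ, b = 2 * a + d + 2 →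
      (f (2 * a + 1) : ℤ) * f (b + 1) - f (2 * a + 2) * f b = -f d := by
    intro a b d hb
    have h := docagne f hf0 hf1 hf (2 * a + 1) b d (by omega)
    rw [h, pow_succ, pow_mul]; norm_num
  -- the cross-product lemma
  have hcross : ∀ i k, 1 ≤ i → i < k → k ≤ 2 * n + 2 →
      0 < (P i).1 * (P k).2 - (P i).2 * (P k).1 := by
    intro i k hi hik hk
    rcases hclass i hi (by omega) with hi1 | ⟨j, hj, hij⟩ | ⟨t, ht, hit⟩ | hi2
    · subst hi1
      rcases hclass k (by omega) hk with hk1 | ⟨j', hj', hkj⟩ | ⟨t', ht', hkt⟩ | hk2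
      · omega
      · subst hkj; rw [hP1, hA' j' hj']; dsimp only; linarith [fposZ (2 * j' + 1)]
      · subst hkt; rw [hP1, hB' t' ht']; dsimp only; linarith [fposZ (2 * t' + 2)]
      · subst hk2; rw [hP1, hPlast]; norm_num
    · subst hij
      rcases hclass k (by omega) hk with hk1 | ⟨j', hj', hkj⟩ | ⟨t', ht', hkt⟩ | hk2
      · omega
      · subst hkj
        rw [hA' j hj, hA' j' hj']
        have hjj : j < j' := by omega
        have h := keyE j (2 * j') (2 * (j' - j) - 1) (by omega)
        dsimp only
        linarith [fposZ (2 * (j' - j) - 1), h]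
      · subst hkt
        rw [hA' j hj, hB' t' ht']
        by_cases hc : j ≤ t'
        · have h := keyE j (2 * t' + 1) (2 * (t' - j)) (by omega)
          dsimp only
          linarith [fposZ (2 * (t' - j)), h]
        · have h := keyO t' (2 * j) (2 * (j - t') - 2) (by omega)
          dsimp only
          linarith [fposZ (2 * (j - t') - 2), h]
      · subst hk2; rw [hA' j hj, hPlast]; dsimp only; linarith [fposZ (2 * j)]
    · subst hit
      rcases hclass k (by omega) hk with hk1 | ⟨j', hj', hkj⟩ | ⟨t', ht', hkt⟩ | hk2
      · omega
      · omega
      · subst hkt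
        rw [hB' t ht, hB' t' ht']
        have htt : t' < t := by omega
        have h := keyO t' (2 * t + 1) (2 * (t - t') - 1) (by omega)
        dsimp only
        linarith [fposZ (2 * (t - t') - 1), h]
      · subst hk2; rw [hB' t ht, hPlast]; dsimp only; linarith [fposZ (2 * t + 1)]
    · omega
  -- partial sums
  have hsum : ∀ k, k ≤ 2 * n + 2 → p k = ∑ i ∈ Finset.Ioc 0 k, P i := by
    intro k
    induction k with
    | zero => intro _; rw [hp0]; simp
    | succ k ih =>
      intro h
      rw [hp (k + 1) (by omega) h]
      have e : k + 1 - 1 = k := by omega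
      rw [e, ih (by omega), Finset.sum_Ioc_succ_top (Nat.zero_le k)]
  have hdiff : ∀ a b, a ≤ b → b ≤ 2 * n + 2 → p b - p a = ∑ i ∈ Finset.Ioc a b, P i := by
    intro a b hab hb
    rw [hsum b hb, hsum a (le_trans hab hb),
      ← Finset.sum_Ioc_consecutive P (Nat.zero_le a) hab]
    abel
  have hlt : ∀ (ν : ℤ × ℤ) a b, a < b → b ≤ 2 * n + 2 →
      (∀ i, a < i → i ≤ b → 0 < dotII ν (P i)) → dotII ν (p a) < dotII ν (p b) := by
    intro ν a b hab hb hpos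
    have h1 : dotII ν (p b) - dotII ν (p a) = ∑ i ∈ Finset.Ioc a b, dotII ν (P i) := by
      rw [← dotII_sub, hdiff a b (le_of_lt hab) hb, dotII_sum]
    have h2 : 0 < ∑ i ∈ Finset.Ioc a b, dotII ν (P i) := by
      apply Finset.sum_pos
      · intro i hi
        rw [Finset.mem_Ioc] at hi
        exact hpos i hi.1 hi.2
      · exact Finset.nonempty_Ioc.2 hab
    linarith
  have hgt : ∀ (ν : ℤ × ℤ) a b, a < b → b ≤ 2 * n + 2 →
      (∀ i, a < i → i ≤ b → dotII ν (P i) < 0) → dotII ν (p b) < dotII ν (p a) := by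
    intro ν a b hab hb hneg
    have h1 : dotII ν (p b) - dotII ν (p a) = ∑ i ∈ Finset.Ioc a b, dotII ν (P i) := by
      rw [← dotII_sub, hdiff a b (le_of_lt hab) hb, dotII_sum]
    have h2 : ∑ i ∈ Finset.Ioc a b, dotII ν (P i) < 0 := by
      apply Finset.sum_neg
      · intro i hi
        rw [Finset.mem_Ioc] at hi
        exact hneg i hi.1 hi.2
      · exact Finset.nonempty_Ioc.2 hab
    linarith
  -- positivity of the (1,1)-functional on all edges
  have hone : ∀ i, 1 ≤ i → i ≤ 2 * n + 2 → 0 < dotII (1, 1) (P i) := by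
    intro i h1 h2
    rcases hclass i h1 h2 with hi1 | ⟨j, hj, rfl⟩ | ⟨t, ht, rfl⟩ | hi2
    · subst hi1; rw [hP1]; simp [dotII]
    · rw [hA' j hj]; simp only [dotII]
      linarith [fposZ (2 * j), fposZ (2 * j + 1)]
    · rw [hB' t ht]; simp only [dotII]
      linarith [fposZ (2 * t + 1), fposZ (2 * t + 2)]
    · subst hi2; rw [hPlast]; simp [dotII]
  -- separating functionals at each index
  have hsep : ∀ j, j ≤ 2 * n + 2 → ∃ ν : ℤ × ℤ,
      (∀ i, 1 ≤ i → i ≤ j → 0 < dotII ν (P i)) ∧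
      (∀ i, j < i → i ≤ 2 * n + 2 → dotII ν (P i) < 0) := by
    intro j hj
    by_cases hj0 : j = 0
    · subst hj0
      refine ⟨(-1, -1), by omega, ?_⟩
      intro i h1 h2
      have := hone i h1 h2
      simp only [dotII] at this ⊢
      linarith
    by_cases hjtop : j = 2 * n + 2
    · subst hjtop
      refine ⟨(1, 1), fun i h1 h2 => hone i h1 h2, by omega⟩
    -- middle case : 1 ≤ j ≤ 2n+1
    refine ⟨((P j).2 + (P (j + 1)).2, -((P j).1 + (P (j + 1)).1)), ?_, ?_⟩
    · intro i h1 h2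
      have hc2 : 0 < (P i).1 * (P (j + 1)).2 - (P i).2 * (P (j + 1)).1 :=
        hcross i (j + 1) h1 (by omega) (by omega)
      rcases eq_or_lt_of_le h2 with rfl | hlt'
      · simp only [dotII]; nlinarith [hc2]
      · have hc1 : 0 < (P i).1 * (P j).2 - (P i).2 * (P j).1 := hcross i j h1 (by omega) (by omega)
        simp only [dotII]; nlinarith [hc1, hc2]
    · intro i hji h2
      have hc1 : 0 < (P j).1 * (P i).2 - (P j).2 * (P i).1 := hcross j i (by omega) hji h2
      rcases eq_or_lt_of_le (show j + 1 ≤ i by omega) with rfl | hlt'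
      · simp only [dotII]; nlinarith [hc1]
      · have hc2 : 0 < (P (j + 1)).1 * (P i).2 - (P (j + 1)).2 * (P i).1 :=
          hcross (j + 1) i (by omega) hlt' h2
        simp only [dotII]; nlinarith [hc1, hc2]
  -- monotonicity package at pivot j
  have master : ∀ j, j ≤ 2 * n + 2 → ∃ ν : ℤ × ℤ,
      (∀ a b, a ≤ b → b ≤ j → dotII ν (p a) ≤ dotII ν (p b)) ∧
      (∀ a b, a < b → b ≤ j → dotII ν (p a) < dotII ν (p b)) ∧
      (∀ a b, j ≤ a → a ≤ b → b ≤ 2 * n + 2 → dotII ν (p b) ≤ dotII ν (p a)) ∧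
      (∀ a b, j ≤ a → a < b → b ≤ 2 * n + 2 → dotII ν (p b) < dotII ν (p a)) := by
    intro j hj
    obtain ⟨ν, hpos, hneg⟩ := hsep j hj
    refine ⟨ν, ?_, ?_, ?_, ?_⟩
    · intro a b hab hb
      rcases eq_or_lt_of_le hab with rfl | h
      · exact le_refl _
      · exact le_of_lt (hlt ν a b h (by omega)
          (fun i h1 h2 => hpos i (by omega) (by omega)))
    · intro a b hab hb
      exact hlt ν a b hab (by omega) (fun i h1 h2 => hpos i (by omega) (by omega))
    · intro a b ha hab hb
      rcases eq_or_lt_of_le hab with rfl | h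
      · exact le_refl _
      · exact le_of_lt (hgt ν a b h hb (fun i h1 h2 => hneg i (by omega) (by omega)))
    · intro a b ha hab hb
      exact hgt ν a b hab hb (fun i h1 h2 => hneg i (by omega) (by omega))
  have D0 : ∀ ν : ℤ × ℤ, dotII ν (p 0) = 0 := by
    intro ν; rw [hp0]; simp [dotII]
  -- the integer vertex set
  set S₀ : Set (ℤ × ℤ) :=
    ({p k | k ≤ 2 * n + 2} ∪ {p (2 * n + 2) - p k | k ∈ Set.Ioo 0 (2 * n + 2)}) with hS₀
  have hmem : ∀ w : ℤ × ℤ, w ∈ S₀ ↔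
      (∃ k, k ≤ 2 * n + 2 ∧ p k = w) ∨
      (∃ k, (0 < k ∧ k < 2 * n + 2) ∧ p (2 * n + 2) - p k = w) := by
    intro w
    simp only [hS₀, Set.mem_union, Set.mem_setOf_eq, Set.mem_Ioo]
  -- no point of the chain coincides with a reflected interior point
  have hneq : ∀ k, k ≤ 2 * n + 2 → ∀ j, 0 < j → j < 2 * n + 2 →
      p k ≠ p (2 * n + 2) - p j := by
    intro k hk j hj1 hj2 heq
    obtain ⟨ν, M1, M2, M3, M4⟩ := master k hk
    have hEq : dotII ν (p k) = dotII ν (p (2 * n + 2)) - dotII ν (p j) := by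
      rw [heq, dotII_sub]
    by_cases hc : k ≤ j
    · have h1 : dotII ν (p (2 * n + 2)) < dotII ν (p j) := M4 j (2 * n + 2) hc (by omega) (le_refl _)
      have h2 : dotII ν (p 0) ≤ dotII ν (p k) := M1 0 k (Nat.zero_le k) (le_refl k)
      rw [D0 ν] at h2
      linarith
    · have h1 : dotII ν (p (2 * n + 2)) ≤ dotII ν (p k) :=
        M3 k (2 * n + 2) (le_refl k) hk (le_refl _)
      have h2 : dotII ν (p 0) < dotII ν (p j) := M2 0 j hj1 (by omega)
      rw [D0 ν] at h2
      linarith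
  -- injectivity of the chain
  have pinj : ∀ a b, a ≤ 2 * n + 2 → b ≤ 2 * n + 2 → p a = p b → a = b := by
    intro a b ha hb heq
    obtain ⟨ν, M1, M2, M3, M4⟩ := master (2 * n + 2) (le_refl _)
    rcases lt_trichotomy a b with h | h | h
    · exact absurd (congrArg (dotII ν) heq) (ne_of_lt (M2 a b h hb))
    · exact h
    · exact absurd (congrArg (dotII ν) heq) (ne_of_gt (M2 b a h ha))
  -- strict domination at each vertex
  have hdom : ∀ q ∈ S₀, ∃ ν : ℤ × ℤ, ∀ w ∈ S₀, w ≠ q → dotII ν w < dotII ν q := by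
    intro q hq
    rcases (hmem q).1 hq with ⟨j, hj, rfl⟩ | ⟨j, ⟨hj1, hj2⟩, rfl⟩
    · obtain ⟨ν, M1, M2, M3, M4⟩ := master j hj
      refine ⟨ν, ?_⟩
      intro w hw hne
      rcases (hmem w).1 hw with ⟨k, hk, rfl⟩ | ⟨k, ⟨hk1, hk2⟩, rfl⟩
      · have hkj : k ≠ j := fun h => hne (by rw [h])
        rcases lt_or_gt_of_ne hkj with h | h
        · exact M2 k j h (le_refl j)
        · exact M4 j k (le_refl j) h hk
      · rw [dotII_sub]
        by_cases hc : j ≤ k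
        · have h1 : dotII ν (p (2 * n + 2)) < dotII ν (p k) :=
            M4 k (2 * n + 2) hc (by omega) (le_refl _)
          have h2 : dotII ν (p 0) ≤ dotII ν (p j) := M1 0 j (Nat.zero_le j) (le_refl j)
          rw [D0 ν] at h2
          linarith
        · have h1 : dotII ν (p (2 * n + 2)) ≤ dotII ν (p j) :=
            M3 j (2 * n + 2) (le_refl j) hj (le_refl _)
          have h2 : dotII ν (p 0) < dotII ν (p k) := M2 0 k hk1 (by omega)
          rw [D0 ν] at h2
          linarith
    · obtain ⟨ν, M1, M2, M3, M4⟩ := master j (by omega)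
      refine ⟨(-ν.1, -ν.2), ?_⟩
      have hflip : ∀ v : ℤ × ℤ, dotII (-ν.1, -ν.2) v = -dotII ν v := by
        intro v; simp [dotII]; ring
      intro w hw hne
      rw [hflip, hflip, dotII_sub]
      rcases (hmem w).1 hw with ⟨k, hk, rfl⟩ | ⟨k, ⟨hk1, hk2⟩, rfl⟩
      · by_cases hc : k ≤ j
        · have h1 : dotII ν (p (2 * n + 2)) < dotII ν (p j) :=
            M4 j (2 * n + 2) (le_refl j) (by omega) (le_refl _)
          have h2 : dotII ν (p 0) ≤ dotII ν (p k) := M1 0 k (Nat.zero_le k) hc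
          rw [D0 ν] at h2
          linarith
        · have h1 : dotII ν (p (2 * n + 2)) ≤ dotII ν (p k) :=
            M3 k (2 * n + 2) (by omega) hk (le_refl _)
          have h2 : dotII ν (p 0) < dotII ν (p j) := M2 0 j hj1 (le_refl j)
          rw [D0 ν] at h2
          linarith
      · rw [dotII_sub]
        have hkj : k ≠ j := by
          intro h; exact hne (by rw [h])
        rcases lt_or_gt_of_ne hkj with h | h
        · have := M2 k j h (le_refl j); linarith
        · have := M4 j k (le_refl j) h (by omega); linarith
  -- counting
  have hEq1 : {x : ℤ × ℤ | ∃ k, k ≤ 2 * n + 2 ∧ p k = x} = p '' Set.Iic (2 * n + 2) := by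
    ext w; simp [Set.mem_image, Set.mem_Iic]
  have hEq2 : {x : ℤ × ℤ | ∃ k, (0 < k ∧ k < 2 * n + 2) ∧ p (2 * n + 2) - p k = x} =
      (fun k => p (2 * n + 2) - p k) '' Set.Ioo 0 (2 * n + 2) := by
    ext w; simp [Set.mem_image, Set.mem_Ioo]
  have hS₀eq : S₀ = p '' Set.Iic (2 * n + 2) ∪
      (fun k => p (2 * n + 2) - p k) '' Set.Ioo 0 (2 * n + 2) := by
    rw [hS₀, ← hEq1, ← hEq2]
    rfl
  have hfin1 : (p '' Set.Iic (2 * n + 2)).Finite := (Set.finite_Iic _).image p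
  have hfin2 : ((fun k => p (2 * n + 2) - p k) '' Set.Ioo 0 (2 * n + 2)).Finite :=
    (Set.finite_Ioo _ _).image _
  have hdisj : Disjoint (p '' Set.Iic (2 * n + 2))
      ((fun k => p (2 * n + 2) - p k) '' Set.Ioo 0 (2 * n + 2)) := by
    rw [Set.disjoint_left]
    rintro x ⟨k, hk, rfl⟩ ⟨j, hj, hjx⟩
    rw [Set.mem_Ioo] at hj
    rw [Set.mem_Iic] at hk
    exact hneq k hk j hj.1 hj.2 hjx.symm
  have hinj1 : Set.InjOn p (Set.Iic (2 * n + 2)) := by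
    intro a ha b hb h
    rw [Set.mem_Iic] at ha hb
    exact pinj a b ha hb h
  have hinj2 : Set.InjOn (fun k => p (2 * n + 2) - p k) (Set.Ioo 0 (2 * n + 2)) := by
    intro a ha b hb h
    rw [Set.mem_Ioo] at ha hb
    refine pinj a b (by omega) (by omega) ?_
    rwa [sub_right_inj] at h
  have hcard1 : (p '' Set.Iic (2 * n + 2)).ncard = 2 * n + 3 := by
    rw [Set.ncard_image_of_injOn hinj1]
    simp [Set.ncard_eq_toFinset_card']
  have hcard2 : ((fun k => p (2 * n + 2) - p k) '' Set.Ioo 0 (2 * n + 2)).ncard = 2 * n + 1 := by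
    rw [Set.ncard_image_of_injOn hinj2]
    simp [Set.ncard_eq_toFinset_card']
  have hcount : S₀.ncard = 4 * n + 4 := by
    rw [hS₀eq, Set.ncard_union_eq hdisj hfin1 hfin2, hcard1, hcard2]
    omega
  have hS' : S = (fun v : ℤ × ℤ => ((v.1 : ℝ), (v.2 : ℝ))) '' S₀ := hS
  refine ⟨?_, ?_, ?_⟩
  · -- central symmetry
    intro v hv
    have hsmul : (2 : ℝ) • ((1 / 2 : ℝ) •
        ((↑(p (2 * n + 2)).1 : ℝ), (↑(p (2 * n + 2)).2 : ℝ))) =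
        ((↑(p (2 * n + 2)).1 : ℝ), (↑(p (2 * n + 2)).2 : ℝ)) := by
      rw [smul_smul]; norm_num
    rw [hsmul]
    rw [hS'] at hv ⊢
    obtain ⟨u, hu, rfl⟩ := hv
    refine ⟨p (2 * n + 2) - u, ?_, ?_⟩
    · rcases (hmem u).1 hu with ⟨k, hk, rfl⟩ | ⟨k, ⟨hk1, hk2⟩, rfl⟩
      · by_cases hk0 : k = 0
        · subst hk0
          refine (hmem _).2 (Or.inl ⟨2 * n + 2, le_refl _, ?_⟩)
          rw [hp0]; ext <;> simp
        by_cases hktop : k = 2 * n + 2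
        · subst hktop
          refine (hmem _).2 (Or.inl ⟨0, by omega, ?_⟩)
          rw [hp0]; simp
        · exact (hmem _).2 (Or.inr ⟨k, ⟨by omega, by omega⟩, rfl⟩)
      · refine (hmem _).2 (Or.inl ⟨k, by omega, ?_⟩)
        rw [sub_sub_cancel]
    · simp only [Prod.mk_sub_mk, Prod.fst_sub, Prod.snd_sub, Prod.mk.injEq]
      push_cast
      constructor <;> ring
  · -- cardinality
    rw [hS', Set.ncard_image_of_injective S₀ intMap_inj]
    exact hcount
  · -- extreme points
    intro v hv
    rw [hS'] at hv
    obtain ⟨q, hq, rfl⟩ := hv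
    obtain ⟨ν, hν⟩ := hdom q hq
    apply not_mem_convexHull_halfspace (ν.1 : ℝ) (ν.2 : ℝ) ((dotII ν q : ℝ) - 1)
    · show (dotII ν q : ℝ) - 1 < (ν.1 : ℝ) * (q.1 : ℝ) + (ν.2 : ℝ) * (q.2 : ℝ)
      have : ((dotII ν q : ℤ) : ℝ) = (ν.1 : ℝ) * (q.1 : ℝ) + (ν.2 : ℝ) * (q.2 : ℝ) := by
        push_cast [dotII]; ring
      rw [← this]
      linarith
    · intro w hw
      obtain ⟨hwS, hwne⟩ := hw
      rw [hS'] at hwS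
      obtain ⟨u, hu, rfl⟩ := hwS
      have hune : u ≠ q := by
        intro h; subst h; exact hwne rfl
      have hlt' : dotII ν u < dotII ν q := hν u hu hune
      have hle : dotII ν u ≤ dotII ν q - 1 := by omega
      have hcast : (ν.1 : ℝ) * ((u.1 : ℤ) : ℝ) + (ν.2 : ℝ) * ((u.2 : ℤ) : ℝ) =
          ((dotII ν u : ℤ) : ℝ) := by
        push_cast [dotII]; ring
      show (ν.1 : ℝ) * (u.1 : ℝ) + (ν.2 : ℝ) * (u.2 : ℝ) ≤ (dotII ν q : ℝ) - 1
      rw [hcast]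
      calc ((dotII ν u : ℤ) : ℝ) ≤ ((dotII ν q - 1 : ℤ) : ℝ) := by exact_mod_cast hle
        _ = (dotII ν q : ℝ) - 1 := by push_cast; ring
end

section
/- Let A, B : ℕ → F be the sequences in the free group F on x, y, w, z defined by A 1 = y w z⁻¹ x, B 1 = y² w z⁻¹ x, A(n+1) = B n · A n, B(n+1) = B n · B n · A n. Then for every n ≥ 1, the images of A n and B n under the homomorphism killing w and z are positive words in x and y (elements of the submonoid generated by x and y), and the word length of the image of A n is f(2n−2) + f(2n−1) and of B n is f(2n−1) + f(2n), where f is the Fibonacci sequence with f 0 = f 1 = 1. -/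
namespace ABfib

/-- Positive word from a list of generators. -/
def pos (l : List (Fin 2)) : FreeGroup (Fin 2) :=
  FreeGroup.mk (l.map (fun i => (i, true)))

lemma pos_nil : pos [] = 1 := rfl

lemma pos_cons (a : Fin 2) (l : List (Fin 2)) :
    pos (a :: l) = FreeGroup.of a * pos l := by
  simp [pos, FreeGroup.of, FreeGroup.mul_mk]

lemma pos_append (l l' : List (Fin 2)) : pos l * pos l' = pos (l ++ l') := by
  simp [pos, FreeGroup.mul_mk]

lemma pos_mem (l : List (Fin 2)) :
    pos l ∈ Submonoid.closure ({FreeGroup.of 0, FreeGroup.of 1} : Set (FreeGroup (Fin 2))) := by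
  induction l with
  | nil => exact (pos_nil ▸ Submonoid.one_mem _)
  | cons a l ih =>
    rw [pos_cons]
    refine mul_mem (Submonoid.subset_closure ?_) ih
    fin_cases a
    · exact Or.inl rfl
    · exact Or.inr rfl

lemma reduce_allTrue (l : List (Fin 2)) :
    FreeGroup.reduce (l.map (fun i => (i, true))) = l.map (fun i => (i, true)) := by
  induction l with
  | nil => simp
  | cons a l ih =>
    rw [List.map_cons, FreeGroup.reduce.cons, ih]
    cases l with
    | nil => simp
    | cons b l => simp

lemma pos_length (l : List (Fin 2)) : (FreeGroup.toWord (pos l)).length = l.length := by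
  rw [pos, FreeGroup.toWord_mk, reduce_allTrue, List.length_map]

end ABfib

/-- The images of `A n` and `B n` under the homomorphism killing `w` and `z` are positive
words in `x` and `y`, of word lengths `f(2n-2) + f(2n-1)` and `f(2n-1) + f(2n)`
respectively. -/
theorem A_B_images_positive_with_fib_lengths
    (f : ℕ → ℕ) (hf0 : f 0 = 1) (hf1 : f 1 = 1)
    (hf : ∀ m, f (m + 2) = f (m + 1) + f m)
    (x y w z : FreeGroup (Fin 4))
    (hx : x = FreeGroup.of 0) (hy : y = FreeGroup.of 1)
    (hw : w = FreeGroup.of 2) (hz : z = FreeGroup.of 3)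
    (A B : ℕ → FreeGroup (Fin 4))
    (hA1 : A 1 = y * w * z⁻¹ * x)
    (hB1 : B 1 = y ^ 2 * w * z⁻¹ * x)
    (hA : ∀ n ≥ 1, A (n + 1) = B n * A n)
    (hB : ∀ n ≥ 1, B (n + 1) = B n * B n * A n)
    (π : FreeGroup (Fin 4) →* FreeGroup (Fin 2))
    (hπx : π x = FreeGroup.of 0) (hπy : π y = FreeGroup.of 1)
    (hπw : π w = 1) (hπz : π z = 1) :
    ∀ n ≥ 1,
      π (A n) ∈ Submonoid.closure ({FreeGroup.of 0, FreeGroup.of 1} : Set (FreeGroup (Fin 2))) ∧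
      π (B n) ∈ Submonoid.closure ({FreeGroup.of 0, FreeGroup.of 1} : Set (FreeGroup (Fin 2))) ∧
      (FreeGroup.toWord (π (A n))).length = f (2 * n - 2) + f (2 * n - 1) ∧
      (FreeGroup.toWord (π (B n))).length = f (2 * n - 1) + f (2 * n) := by
  -- key claim: images are `pos` of lists with the right lengths
  have key : ∀ m : ℕ, ∃ la lb : List (Fin 2),
      π (A (m + 1)) = ABfib.pos la ∧ π (B (m + 1)) = ABfib.pos lb ∧
      la.length = f (2 * m) + f (2 * m + 1) ∧
      lb.length = f (2 * m + 1) + f (2 * m + 2) := by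
    intro m
    induction m with
    | zero =>
      refine ⟨[1, 0], [1, 1, 0], ?_, ?_, ?_, ?_⟩
      · rw [hA1]
        simp only [map_mul, map_inv, hπx, hπy, hπw, hπz, inv_one, mul_one, one_mul]
        rw [ABfib.pos_cons, ABfib.pos_cons, ABfib.pos_nil, mul_one]
      · rw [hB1]
        simp only [map_mul, map_pow, map_inv, hπx, hπy, hπw, hπz, inv_one, mul_one, one_mul]
        rw [ABfib.pos_cons, ABfib.pos_cons, ABfib.pos_cons, ABfib.pos_nil, mul_one, sq,
          mul_assoc]
      · simp [hf0, hf1]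
      · simp [hf 0, hf0, hf1]
    | succ m ih =>
      obtain ⟨la, lb, hla, hlb, hlal, hlbl⟩ := ih
      refine ⟨lb ++ la, lb ++ lb ++ la, ?_, ?_, ?_, ?_⟩
      · rw [hA (m + 1) (Nat.le_add_left 1 m), map_mul, hla, hlb, ABfib.pos_append]
      · rw [hB (m + 1) (Nat.le_add_left 1 m), map_mul, map_mul, hla, hlb,
          ABfib.pos_append, ABfib.pos_append]
      · simp only [List.length_append, hlal, hlbl]
        have h1 := hf (2 * m); have h2 := hf (2 * m + 1)
        ring_nf at h1 h2 ⊢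
        omega
      · simp only [List.length_append, hlal, hlbl]
        have h1 := hf (2 * m); have h2 := hf (2 * m + 1); have h3 := hf (2 * m + 2)
        ring_nf at h1 h2 h3 ⊢
        omega
  intro n hn
  obtain ⟨m, rfl⟩ : ∃ m, n = m + 1 := ⟨n - 1, by omega⟩
  obtain ⟨la, lb, hla, hlb, hlal, hlbl⟩ := key m
  have e1 : 2 * (m + 1) - 2 = 2 * m := by omega
  have e2 : 2 * (m + 1) - 1 = 2 * m + 1 := by omega
  have e3 : 2 * (m + 1) = 2 * m + 2 := by omega
  refine ⟨hla ▸ ABfib.pos_mem la, hlb ▸ ABfib.pos_mem lb, ?_, ?_⟩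
  · rw [hla, ABfib.pos_length, e1, e2, hlal]
  · rw [hlb, ABfib.pos_length, e2, e3, hlbl]
end
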